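/- Boundary characterization of the generalized lasso dual solution: suppose ν̂ minimizes the function ν ↦ (1/2)‖y − Dᵀν‖₂² over the box { ν ∈ ℝᵐ : ‖ν‖_∞ ≤ λ }, and set μ̂ = y − Dᵀν̂. Then for every index i ∈ {1, …, m}: if (Dμ̂)_i > 0 then ν̂_i = λ, and if (Dμ̂)_i < 0 then ν̂_i = −λ. -/
import Mathlib


/-- Boundary characterization of the generalized lasso dual solution: if `ν̂`
minimizes `(1/2)‖y − Dᵀν‖₂²` over the box `{ ν : ‖ν‖_∞ ≤ λ }` and
`μ̂ = y − Dᵀν̂`, then for each coordinate `i`: `(Dμ̂)_i > 0` forces `ν̂_i = λ`,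
and `(Dμ̂)_i < 0` forces `ν̂_i = −λ`. -/
theorem genlasso_dual_boundary (n m : ℕ) (hn : 1 ≤ n) (hm : 1 ≤ m)
    (y : Fin n → ℝ) (D : Matrix (Fin m) (Fin n) ℝ) (lam : ℝ) (hlam : 0 < lam)
    (νhat : Fin m → ℝ) (hfeas : ∀ i, |νhat i| ≤ lam)
    (hmin : ∀ ν : Fin m → ℝ, (∀ i, |ν i| ≤ lam) →
      (1 / 2) * (∑ j, (y j - D.transpose.mulVec νhat j) ^ 2) ≤
        (1 / 2) * (∑ j, (y j - D.transpose.mulVec ν j) ^ 2)) :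
    ∀ i : Fin m,
      (0 < D.mulVec (fun j => y j - D.transpose.mulVec νhat j) i → νhat i = lam) ∧
      (D.mulVec (fun j => y j - D.transpose.mulVec νhat j) i < 0 → νhat i = -lam) := by
  intro i
  set μ : Fin n → ℝ := fun j => y j - D.transpose.mulVec νhat j with hμ
  set g : ℝ := D.mulVec μ i with hg
  set C : ℝ := ∑ j, (D i j) ^ 2 with hC
  have hC0 : 0 ≤ C := Finset.sum_nonneg fun j _ => sq_nonneg _
  have hgsum : g = ∑ j, μ j * D i j := by
    simp [hg, Matrix.mulVec, dotProduct, mul_comm]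
  -- key inequality: for any admissible perturbation t, 2 t g ≤ t² C
  have key : ∀ t : ℝ, |νhat i + t| ≤ lam → 2 * t * g ≤ t ^ 2 * C := by
    intro t ht
    set ν : Fin m → ℝ := Function.update νhat i (νhat i + t) with hν
    have hfeas' : ∀ k, |ν k| ≤ lam := by
      intro k
      by_cases hk : k = i
      · subst hk; simpa [hν] using ht
      · simpa [hν, Function.update_of_ne hk] using hfeas k
    have hmv : ∀ j, D.transpose.mulVec ν j = D.transpose.mulVec νhat j + t * D i j := by
      intro j
      simp only [Matrix.mulVec, dotProduct, Matrix.transpose_apply, hν]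
      have : ∀ k ∈ Finset.univ, D k j * Function.update νhat i (νhat i + t) k
          = D k j * νhat k + (if k = i then t * D i j else 0) := by
        intro k _
        by_cases hk : k = i
        · subst hk; simp [Function.update_self]; ring
        · simp [Function.update_of_ne hk, hk]
      rw [Finset.sum_congr rfl this, Finset.sum_add_distrib]
      simp
    have h := hmin ν hfeas'
    have hexp : ∀ j, (y j - D.transpose.mulVec ν j) ^ 2
        = (y j - D.transpose.mulVec νhat j) ^ 2 - 2 * (t * (μ j * D i j)) + t ^ 2 * (D i j) ^ 2 := by
      intro j
      rw [hmv j]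
      simp only [hμ]
      ring
    rw [Finset.sum_congr rfl (fun j _ => hexp j)] at h
    rw [Finset.sum_add_distrib, Finset.sum_sub_distrib, ← Finset.mul_sum, ← Finset.mul_sum,
      ← Finset.mul_sum] at h
    rw [← hgsum] at h
    nlinarith [h]
  constructor
  · intro hgpos
    by_contra hne
    have hlt : νhat i < lam := lt_of_le_of_ne (abs_le.mp (hfeas i)).2 hne
    set t : ℝ := min (lam - νhat i) (g / (C + 1)) with htdef
    have ht0 : 0 < t := lt_min (by linarith) (div_pos hgpos (by linarith))
    have htle : νhat i + t ≤ lam := by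
      have := min_le_left (lam - νhat i) (g / (C + 1)); linarith
    have htge : -lam ≤ νhat i + t := by
      have := (abs_le.mp (hfeas i)).1; linarith
    have h := key t (abs_le.mpr ⟨htge, htle⟩)
    have htg : t * (C + 1) ≤ g := (le_div_iff₀ (by linarith)).mp (min_le_right _ _)
    have h1 : 2 * g ≤ t * C := by nlinarith [h, ht0]
    linarith
  · intro hgneg
    by_contra hne
    have hlt : -lam < νhat i := lt_of_le_of_ne (abs_le.mp (hfeas i)).1 (Ne.symm hne)
    set t : ℝ := min (νhat i + lam) (-g / (C + 1)) with htdef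
    have ht0 : 0 < t := lt_min (by linarith) (div_pos (by linarith) (by linarith))
    have htle : -lam ≤ νhat i - t := by
      have := min_le_left (νhat i + lam) (-g / (C + 1)); linarith
    have htge : νhat i - t ≤ lam := by
      have := (abs_le.mp (hfeas i)).2; linarith
    have h := key (-t) (by rw [show νhat i + -t = νhat i - t by ring]; exact abs_le.mpr ⟨htle, htge⟩)
    have htg : t * (C + 1) ≤ -g := (le_div_iff₀ (by linarith)).mp (min_le_right _ _)
    have h1 : 2 * (-g) ≤ t * C := by nlinarith [h, ht0]
    linarith
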